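/- arXiv:2110.04679 — 3 statements merged into one kernel-verified Lean document; each statement's English description precedes it below -/
import Mathlib

section
/- Let F : C → D be a strongly κ-accessible functor between κ-accessible categories. If the restriction of F to the full subcategories of κ-presentable objects is an equivalence of categories, then F itself is an equivalence of categories. -/
open CategoryTheory CategoryTheory.Limits Opposite

universe v u

/-- A small category is `κ`-small if it has fewer than `κ` morphisms. -/
def CardSmallCat (κ : Cardinal.{v}) (K : Type v) [SmallCategory K] : Prop :=
  Cardinal.mk (Σ X Y : K, X ⟶ Y) < κ

/-- A small category `J` is `κ`-filtered if every `κ`-small diagram in `J` admits a cocone. -/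
def IsCardFiltered (κ : Cardinal.{v}) (J : Type v) [SmallCategory J] : Prop :=
  ∀ (K : Type v) (_ : SmallCategory K), CardSmallCat κ K →
    ∀ F : K ⥤ J, Nonempty (Cocone F)

/-- An object `A` is `κ`-presentable if `Hom(A, -)` preserves all small `κ`-filtered colimits. -/
def IsPresentableObj (κ : Cardinal.{v}) {C : Type u} [Category.{v} C] (A : C) : Prop :=
  ∀ (J : Type v) (_ : SmallCategory J), IsCardFiltered κ J →
    PreservesColimitsOfShape J (coyoneda.obj (op A))

/-- A category is `κ`-accessible: it has `κ`-filtered colimits and every object is a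
`κ`-filtered colimit of `κ`-presentable objects. -/
structure IsAccessibleCat (κ : Cardinal.{v}) (C : Type u) [Category.{v} C] : Prop where
  hasFilteredColimits : ∀ (J : Type v) (_ : SmallCategory J), IsCardFiltered κ J →
    HasColimitsOfShape J C
  gen : ∀ X : C, ∃ (J : Type v) (_ : SmallCategory J) (F : J ⥤ C) (c : Cocone F),
    IsCardFiltered κ J ∧ (∀ j : J, IsPresentableObj κ (F.obj j)) ∧
      Nonempty (IsColimit c) ∧ c.pt = X

/-- A functor between `κ`-accessible categories is strongly `κ`-accessible if it preserves
`κ`-filtered colimits and `κ`-presentable objects. -/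
structure IsStronglyAccessible (κ : Cardinal.{v}) {C : Type u} {D : Type u} [Category.{v} C]
    [Category.{v} D] (F : C ⥤ D) : Prop where
  preservesFiltered : ∀ (J : Type v) (_ : SmallCategory J), IsCardFiltered κ J →
    PreservesColimitsOfShape J F
  preservesPresentable : ∀ A : C, IsPresentableObj κ A → IsPresentableObj κ (F.obj A)

/-- A category is locally `κ`-presentable if it is `κ`-accessible and cocomplete. -/
def IsLocallyPresentableCat (κ : Cardinal.{v}) (C : Type u) [Category.{v} C] : Prop :=
  IsAccessibleCat κ C ∧ HasColimits C


section Aux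

variable {C D : Type u} [Category.{v} C] [Category.{v} D]

/-- Bijectivity of `F.map` when the source is `κ`-presentable. -/
lemma aux_bij_of_presentable (κ : Cardinal.{v}) (hC : IsAccessibleCat κ C)
    (F : C ⥤ D) (hF : IsStronglyAccessible κ F)
    (hbase : ∀ (A B : C), IsPresentableObj κ A → IsPresentableObj κ B →
      Function.Bijective (F.map : (A ⟶ B) → (F.obj A ⟶ F.obj B)))
    (X Y : C) (hX : IsPresentableObj κ X) :
    Function.Bijective (F.map : (X ⟶ Y) → (F.obj X ⟶ F.obj Y)) := by
  obtain ⟨J, instJ, G, c, hfil, hpres, ⟨hc⟩, hpt⟩ := hC.gen Y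
  subst hpt
  haveI : PreservesColimitsOfShape J (coyoneda.obj (op X)) := hX J instJ hfil
  haveI : PreservesColimitsOfShape J (coyoneda.obj (op (F.obj X))) :=
    hF.preservesPresentable X hX J instJ hfil
  haveI : PreservesColimitsOfShape J F := hF.preservesFiltered J instJ hfil
  have hc1 : IsColimit ((coyoneda.obj (op X)).mapCocone c) :=
    isColimitOfPreserves (coyoneda.obj (op X)) hc
  have hc2 : IsColimit ((coyoneda.obj (op (F.obj X))).mapCocone (F.mapCocone c)) :=
    isColimitOfPreserves (coyoneda.obj (op (F.obj X))) (isColimitOfPreserves F hc)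
  -- the natural isomorphism between the two `Type`-valued diagrams
  let α : G ⋙ coyoneda.obj (op X) ≅ (G ⋙ F) ⋙ coyoneda.obj (op (F.obj X)) :=
    NatIso.ofComponents
      (fun j => Equiv.toIso (Equiv.ofBijective
        (fun f : X ⟶ G.obj j => F.map f) (hbase X (G.obj j) hX (hpres j))))
      (fun {j j'} u => by
        ext f
        simp [Equiv.ofBijective])
  have key : (F.map : (X ⟶ c.pt) → (F.obj X ⟶ F.obj c.pt)) =
      (IsColimit.coconePointsIsoOfNatIso hc1 hc2 α).hom := by
    suffices hk : TypeCat.ofHom F.map = (IsColimit.coconePointsIsoOfNatIso hc1 hc2 α).hom by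
      rw [← hk]; rfl
    apply hc1.hom_ext
    intro j
    rw [IsColimit.comp_coconePointsIsoOfNatIso_hom]
    ext f
    simp only [types_comp_apply]
    show F.map (f ≫ c.ι.app j) = F.map f ≫ F.map (c.ι.app j)
    simp
  rw [key]
  exact (Iso.toEquiv (IsColimit.coconePointsIsoOfNatIso hc1 hc2 α)).bijective

end Aux


/-- The restriction of a strongly `κ`-accessible functor `F` to the full subcategories
of `κ`-presentable objects. -/
def restrictToPresentables (κ : Cardinal.{v}) {C D : Type u} [Category.{v} C]
    [Category.{v} D] (F : C ⥤ D) (hF : IsStronglyAccessible κ F) :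
    ObjectProperty.FullSubcategory (IsPresentableObj κ (C := C)) ⥤
      ObjectProperty.FullSubcategory (IsPresentableObj κ (C := D)) :=
  ObjectProperty.lift _ (ObjectProperty.ι _ ⋙ F)
    (fun X => hF.preservesPresentable X.obj X.property)

/-- If a strongly `κ`-accessible functor between `κ`-accessible categories restricts
to an equivalence on `κ`-presentable objects, it is an equivalence. -/
theorem stronglyAccessible_isEquivalence_of_restriction {C D : Type u} [Category.{v} C]
    [Category.{v} D] (κ : Cardinal.{v}) (hκ : κ.IsRegular)
    (hC : IsAccessibleCat κ C) (hD : IsAccessibleCat κ D)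
    (F : C ⥤ D) (hF : IsStronglyAccessible κ F)
    (hres : (restrictToPresentables κ F hF).IsEquivalence) :
    F.IsEquivalence := by
  classical
  have hbase : ∀ (A B : C), IsPresentableObj κ A → IsPresentableObj κ B →
      Function.Bijective (F.map : (A ⟶ B) → (F.obj A ⟶ F.obj B)) := by
    intro A B hA hB
    haveI := hres
    constructor
    · intro f g h
      exact congrArg InducedCategory.Hom.hom ((restrictToPresentables κ F hF).map_injective
        (InducedCategory.hom_ext (show ((restrictToPresentables κ F hF).map (X := ⟨A, hA⟩) (Y := ⟨B, hB⟩) (ObjectProperty.homMk f)).hom =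
          ((restrictToPresentables κ F hF).map (X := ⟨A, hA⟩) (Y := ⟨B, hB⟩) (ObjectProperty.homMk g)).hom from h)))
    · intro g
      obtain ⟨f, hf⟩ := (restrictToPresentables κ F hF).map_surjective
        (X := (⟨A, hA⟩ : ObjectProperty.FullSubcategory (IsPresentableObj κ (C := C))))
        (Y := (⟨B, hB⟩ : ObjectProperty.FullSubcategory (IsPresentableObj κ (C := C)))) (ObjectProperty.homMk g)
      exact ⟨f.hom, (congrArg InducedCategory.Hom.hom hf :)⟩
  have hbij : ∀ X Y : C, Function.Bijective (F.map : (X ⟶ Y) → (F.obj X ⟶ F.obj Y)) := by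
    intro X Y
    obtain ⟨J, instJ, G, c, hfil, hpres, ⟨hc⟩, hpt⟩ := hC.gen X
    subst hpt
    haveI : PreservesColimitsOfShape J F := hF.preservesFiltered J instJ hfil
    have hc' : IsColimit (F.mapCocone c) := isColimitOfPreserves F hc
    constructor
    · intro f g h
      apply hc.hom_ext
      intro j
      exact (aux_bij_of_presentable κ hC F hF hbase (G.obj j) Y (hpres j)).1
        (by rw [F.map_comp, F.map_comp, h])
    · intro h
      have hsurj := fun j => (aux_bij_of_presentable κ hC F hF hbase (G.obj j) Y (hpres j)).2
      choose fj hfj using fun j => hsurj j (F.map (c.ι.app j) ≫ h)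
      have hcompat : ∀ {j j'} (u : j ⟶ j'), G.map u ≫ fj j' = fj j := by
        intro j j' u
        apply (aux_bij_of_presentable κ hC F hF hbase (G.obj j) Y (hpres j)).1
        rw [F.map_comp, hfj, hfj, ← Category.assoc, ← F.map_comp, c.w]
      let d : Cocone G := ⟨Y, ⟨fj, fun {j j'} u => by simp [hcompat u]⟩⟩
      refine ⟨hc.desc d, ?_⟩
      apply hc'.hom_ext
      intro j
      show F.map (c.ι.app j) ≫ F.map (hc.desc d) = F.map (c.ι.app j) ≫ h
      rw [← F.map_comp, hc.fac]
      exact hfj j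
  haveI : F.Full := { map_surjective := fun {X Y} => (hbij X Y).2 }
  haveI : F.Faithful := { map_injective := fun {X Y} => (hbij X Y).1 }
  haveI : F.EssSurj := by
    constructor
    intro Y
    obtain ⟨J, instJ, G, c, hfil, hpres, ⟨hc⟩, hpt⟩ := hD.gen Y
    subst hpt
    haveI : PreservesColimitsOfShape J F := hF.preservesFiltered J instJ hfil
    haveI : HasColimitsOfShape J C := hC.hasFilteredColimits J instJ hfil
    haveI := hres
    let Gsub : J ⥤ ObjectProperty.FullSubcategory (IsPresentableObj κ (C := D)) :=
      ObjectProperty.lift _ G hpres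
    let G' : J ⥤ C := Gsub ⋙ (restrictToPresentables κ F hF).asEquivalence.inverse ⋙ ObjectProperty.ι _
    have hc'' : IsColimit (F.mapCocone (colimit.cocone G')) :=
      isColimitOfPreserves F (colimit.isColimit G')
    let iso : G' ⋙ F ≅ G :=
      NatIso.ofComponents
        (fun j => (ObjectProperty.ι _).mapIso
          ((restrictToPresentables κ F hF).asEquivalence.counitIso.app (Gsub.obj j)))
        (fun {j j'} u =>
          congrArg InducedCategory.Hom.hom
            ((restrictToPresentables κ F hF).asEquivalence.counitIso.hom.naturality (Gsub.map u)))
    exact ⟨colimit G', ⟨IsColimit.coconePointsIsoOfNatIso hc'' hc iso⟩⟩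
  exact {}
end

section
/- Let C and D be κ-accessible categories for a regular cardinal κ. Restriction to κ-presentable objects and κ-ind-completion induce an equivalence between the groupoid of functors K_κ(C) → K_κ(D) with natural isomorphisms, and the groupoid of strongly κ-accessible functors C → D with natural isomorphisms. -/
open CategoryTheory CategoryTheory.Limits Opposite

universe v u

/-- The restriction functor from the full subcategory of strongly `κ`-accessible
functors `C ⥤ D` to functors between the subcategories of `κ`-presentable objects. -/
def restrictionFunctor (κ : Cardinal.{v}) (C D : Type u) [Category.{v} C]
    [Category.{v} D] :
    ObjectProperty.FullSubcategory (fun F : C ⥤ D => IsStronglyAccessible κ F) ⥤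
      (ObjectProperty.FullSubcategory (IsPresentableObj κ (C := C)) ⥤
        ObjectProperty.FullSubcategory (IsPresentableObj κ (C := D))) where
  obj F := ObjectProperty.lift _ (ObjectProperty.ι _ ⋙ F.obj)
    (fun X => F.property.preservesPresentable X.obj X.property)
  map {F G} η :=
    { app := fun X => ObjectProperty.homMk (η.hom.app X.obj)
      naturality := fun X Y f => by ext; exact η.hom.naturality f.hom }
  map_id _ := rfl
  map_comp _ _ := rfl

section Aux

variable {C : Type u} [Category.{v} C]

theorem isFiltered_of_isCardFiltered (κ : Cardinal.{v}) (hκ : Cardinal.aleph0 ≤ κ)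
    (J : Type v) [SmallCategory J] (h : IsCardFiltered κ J) : IsFiltered J := by
  apply IsFiltered.of_cocone_nonempty.{v}
  intro K _ _ F
  exact h K _ (lt_of_lt_of_le (Cardinal.lt_aleph0_of_finite _) hκ) F

/-- Factor a morphism from a presentable object through a `κ`-filtered colimit. -/
theorem exists_factor {κ : Cardinal.{v}} {J : Type v} [SmallCategory J]
    (filt : IsCardFiltered κ J) {F : J ⥤ C} {t : Cocone F} (ht : IsColimit t)
    {A : C} (hA : IsPresentableObj κ A) (g : A ⟶ t.pt) :
    ∃ (j : J) (h : A ⟶ F.obj j), h ≫ t.ι.app j = g := by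
  haveI : PreservesColimitsOfShape J (coyoneda.obj (op A)) := hA J _ filt
  have h2 := Types.jointly_surjective (F ⋙ coyoneda.obj (op A))
    (isColimitOfPreserves (coyoneda.obj (op A)) ht) g
  obtain ⟨j, y, hy⟩ := h2
  exact ⟨j, y, hy⟩

/-- Equalize two factorizations of the same morphism from a presentable object. -/
theorem exists_equalize {κ : Cardinal.{v}} (hκ : κ.IsRegular) {J : Type v} [SmallCategory J]
    (filt : IsCardFiltered κ J) {F : J ⥤ C} {t : Cocone F} (ht : IsColimit t)
    {A : C} (hA : IsPresentableObj κ A) {j₁ j₂ : J} (h₁ : A ⟶ F.obj j₁) (h₂ : A ⟶ F.obj j₂)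
    (e : h₁ ≫ t.ι.app j₁ = h₂ ≫ t.ι.app j₂) :
    ∃ (k : J) (u : j₁ ⟶ k) (v : j₂ ⟶ k), h₁ ≫ F.map u = h₂ ≫ F.map v := by
  haveI : PreservesColimitsOfShape J (coyoneda.obj (op A)) := hA J _ filt
  haveI : IsFiltered J := isFiltered_of_isCardFiltered κ hκ.aleph0_le J filt
  have := (Types.FilteredColimit.isColimit_eq_iff (F ⋙ coyoneda.obj (op A))
    (isColimitOfPreserves (coyoneda.obj (op A)) ht) (xi := h₁) (xj := h₂)).1 e
  exact this

end Aux
section Pres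

variable {C : Type u} [Category.{v} C]

/-- A bundled presentation of an object `X` as a `κ`-filtered colimit of presentables. -/
structure Pres (κ : Cardinal.{v}) (X : C) where
  J : Type v
  [inst : SmallCategory J]
  F : J ⥤ C
  filt : IsCardFiltered κ J
  pres : ∀ j, IsPresentableObj κ (F.obj j)
  ι : F ⟶ (Functor.const J).obj X
  ht : IsColimit (Cocone.mk X ι)

attribute [instance] Pres.inst

theorem nonempty_pres {κ : Cardinal.{v}} (hC : IsAccessibleCat κ C) (X : C) :
    Nonempty (Pres κ X) := by
  obtain ⟨J, sc, F, c, filt, pres, ⟨hc⟩, rfl⟩ := hC.gen X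
  exact ⟨⟨J, F, filt, pres, c.ι, hc⟩⟩

namespace Pres

variable {κ : Cardinal.{v}} {X : C} (p : Pres κ X)

/-- The legs of the presentation. -/
def app (j : p.J) : p.F.obj j ⟶ X := p.ι.app j

theorem w {j j' : p.J} (u : j ⟶ j') : p.F.map u ≫ p.app j' = p.app j := by
  simpa [app] using p.ι.naturality u

theorem exists_factor' {A : C} (hA : IsPresentableObj κ A) (g : A ⟶ X) :
    ∃ (j : p.J) (h : A ⟶ p.F.obj j), h ≫ p.app j = g :=
  exists_factor p.filt p.ht hA g

theorem exists_equalize' (hκ : κ.IsRegular) {A : C} (hA : IsPresentableObj κ A)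
    {j₁ j₂ : p.J} (h₁ : A ⟶ p.F.obj j₁) (h₂ : A ⟶ p.F.obj j₂)
    (e : h₁ ≫ p.app j₁ = h₂ ≫ p.app j₂) :
    ∃ (k : p.J) (u : j₁ ⟶ k) (v : j₂ ⟶ k), h₁ ≫ p.F.map u = h₂ ≫ p.F.map v :=
  exists_equalize hκ p.filt p.ht hA h₁ h₂ e

end Pres

end Pres
namespace AccExt

variable {C D : Type u} [Category.{v} C] [Category.{v} D]

/-- Reinterpret a morphism of underlying objects as a morphism in a full subcategory. -/
abbrev toK {P : C → Prop} {A B : ObjectProperty.FullSubcategory P} (f : A.obj ⟶ B.obj) : A ⟶ B := ObjectProperty.homMk f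

@[simp] theorem toK_comp {P : C → Prop} {A B E : ObjectProperty.FullSubcategory P} (f : A.obj ⟶ B.obj)
    (g : B.obj ⟶ E.obj) : toK f ≫ toK g = toK (f ≫ g) := rfl

@[simp] theorem toK_id {P : C → Prop} (A : ObjectProperty.FullSubcategory P) : toK (𝟙 A.obj) = 𝟙 A := rfl

/-- Build an isomorphism in a full subcategory from one of underlying objects. -/
def isoK {P : C → Prop} {A B : ObjectProperty.FullSubcategory P} (e : A.obj ≅ B.obj) : A ≅ B where
  hom := toK e.hom
  inv := toK e.inv
  hom_inv_id := by ext; exact e.hom_inv_id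
  inv_hom_id := by ext; exact e.inv_hom_id

variable {κ : Cardinal.{v}}

/-- A chosen presentation of each object. -/
noncomputable def presOf (hC : IsAccessibleCat κ C) (X : C) : Pres κ X :=
  (nonempty_pres hC X).some

/-- The chosen presentation, lifted to the subcategory of presentables. -/
noncomputable abbrev liftP (hC : IsAccessibleCat κ C) (X : C) :
    (presOf hC X).J ⥤ ObjectProperty.FullSubcategory (IsPresentableObj κ (C := C)) :=
  ObjectProperty.lift _ (presOf hC X).F (presOf hC X).pres

variable (H : ObjectProperty.FullSubcategory (IsPresentableObj κ (C := C)) ⥤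
    ObjectProperty.FullSubcategory (IsPresentableObj κ (C := D)))

/-- The functor to `D` underlying `H`. -/
abbrev HD : ObjectProperty.FullSubcategory (IsPresentableObj κ (C := C)) ⥤ D :=
  H ⋙ ObjectProperty.ι _

variable (hC : IsAccessibleCat κ C) (hD : IsAccessibleCat κ D)

/-- The diagram in `D` obtained by applying `H` to the chosen presentation of `X`. -/
noncomputable abbrev extDiag (X : C) : (presOf hC X).J ⥤ D :=
  liftP hC X ⋙ H ⋙ ObjectProperty.ι _

theorem extDiag_map (X : C) {j k : (presOf hC X).J} (u : j ⟶ k) :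
    (extDiag H hC X).map u = (HD H).map (toK ((presOf hC X).F.map u)) := rfl

/-- A chosen colimit cocone over `extDiag`. -/
noncomputable def extCC (X : C) : ColimitCocone (extDiag H hC X) := by
  haveI := hD.hasFilteredColimits _ _ (presOf hC X).filt
  exact ⟨colimit.cocone _, colimit.isColimit _⟩

/-- The value of the extension of `H` at `X`. -/
noncomputable abbrev extObj (X : C) : D := (extCC H hC hD X).cocone.pt


section

variable {A : ObjectProperty.FullSubcategory (IsPresentableObj κ (C := C))} {X : C}

/-- Two factorizations through the chosen presentation induce the same map to the colimit. -/
theorem ext_indep (hκ : κ.IsRegular) {j₁ j₂ : (presOf hC X).J}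
    (h₁ : A.obj ⟶ (presOf hC X).F.obj j₁) (h₂ : A.obj ⟶ (presOf hC X).F.obj j₂)
    (e : h₁ ≫ (presOf hC X).app j₁ = h₂ ≫ (presOf hC X).app j₂) :
    (HD H).map (toK h₁) ≫ (extCC H hC hD X).cocone.ι.app j₁ =
      (HD H).map (toK h₂) ≫ (extCC H hC hD X).cocone.ι.app j₂ := by
  set p := presOf hC X with hp
  obtain ⟨k, u, v, huv⟩ := p.exists_equalize' hκ A.property h₁ h₂ e
  rw [← (extCC H hC hD X).cocone.w u, ← (extCC H hC hD X).cocone.w v,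
    extDiag_map, extDiag_map, ← Category.assoc, ← Category.assoc,
    ← Functor.map_comp, ← Functor.map_comp, toK_comp, toK_comp, huv]

/-- The extension of `H` on morphisms out of a presentable object. -/
noncomputable def ext (hκ : κ.IsRegular) (A : ObjectProperty.FullSubcategory (IsPresentableObj κ (C := C))) {X : C}
    (g : A.obj ⟶ X) : (HD H).obj A ⟶ extObj H hC hD X :=
  (HD H).map (toK ((presOf hC X).exists_factor' A.property g).choose_spec.choose) ≫
    (extCC H hC hD X).cocone.ι.app ((presOf hC X).exists_factor' A.property g).choose

theorem ext_fac (hκ : κ.IsRegular) {j : (presOf hC X).J} (h : A.obj ⟶ (presOf hC X).F.obj j)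
    {g : A.obj ⟶ X} (e : h ≫ (presOf hC X).app j = g) :
    ext H hC hD hκ A g = (HD H).map (toK h) ≫ (extCC H hC hD X).cocone.ι.app j := by
  apply ext_indep H hC hD hκ
  rw [e]
  exact ((presOf hC X).exists_factor' A.property g).choose_spec.choose_spec

end

section

variable {A A' : ObjectProperty.FullSubcategory (IsPresentableObj κ (C := C))} {X Y : C}

theorem ext_pre (hκ : κ.IsRegular) (k : A'.obj ⟶ A.obj) (g : A.obj ⟶ X) :
    ext H hC hD hκ A' (k ≫ g) = (HD H).map (toK k) ≫ ext H hC hD hκ A g := by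
  obtain ⟨j, h, e⟩ := (presOf hC X).exists_factor' A.property g
  rw [ext_fac H hC hD hκ h e, ext_fac H hC hD hκ (k ≫ h) (by rw [Category.assoc, e]),
    ← Category.assoc, ← Functor.map_comp, toK_comp]

theorem ext_ι (hκ : κ.IsRegular) (j : (presOf hC X).J) :
    ext H hC hD hκ ((liftP hC X).obj j) ((presOf hC X).app j) =
      (extCC H hC hD X).cocone.ι.app j := by
  rw [ext_fac H hC hD hκ (𝟙 _) (Category.id_comp _), toK_id, CategoryTheory.Functor.map_id,
    Category.id_comp]

/-- The extension of `H` on arbitrary morphisms. -/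
noncomputable def extMap (hκ : κ.IsRegular) (f : X ⟶ Y) : extObj H hC hD X ⟶ extObj H hC hD Y :=
  (extCC H hC hD X).isColimit.desc (Cocone.mk (extObj H hC hD Y)
    { app := fun j => ext H hC hD hκ _ ((presOf hC X).app j ≫ f)
      naturality := fun j j' u => by
        dsimp only [Functor.const_obj_obj, Functor.const_obj_map]
        rw [Category.comp_id, extDiag_map, ← ext_pre H hC hD hκ, ← Category.assoc,
          (presOf hC X).w u] })

theorem extMap_ι (hκ : κ.IsRegular) (f : X ⟶ Y) (j : (presOf hC X).J) :
    (extCC H hC hD X).cocone.ι.app j ≫ extMap H hC hD hκ f =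
      ext H hC hD hκ _ ((presOf hC X).app j ≫ f) :=
  (extCC H hC hD X).isColimit.fac _ j

theorem ext_map (hκ : κ.IsRegular) (g : A.obj ⟶ X) (f : X ⟶ Y) :
    ext H hC hD hκ A g ≫ extMap H hC hD hκ f = ext H hC hD hκ A (g ≫ f) := by
  obtain ⟨j, h, e⟩ := (presOf hC X).exists_factor' A.property g
  rw [ext_fac H hC hD hκ h e, Category.assoc, extMap_ι, ← ext_pre H hC hD hκ, ← Category.assoc, e]

end

/-- The extension of `H` to a functor `C ⥤ D`. -/
noncomputable abbrev Ext (hκ : κ.IsRegular) : C ⥤ D where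
  obj := extObj H hC hD
  map := extMap H hC hD hκ
  map_id X := (extCC H hC hD X).isColimit.hom_ext (fun j => by
    rw [extMap_ι H hC hD hκ, Category.comp_id]
    exact (ext_ι H hC hD hκ j).trans (Category.comp_id _).symm)
  map_comp {X Y Z} f g := (extCC H hC hD X).isColimit.hom_ext (fun j => by
    conv_rhs => rw [← Category.assoc, extMap_ι H hC hD hκ, ext_map H hC hD hκ]
    rw [extMap_ι H hC hD hκ, Category.assoc])

end AccExt
namespace AccExt

variable {C D : Type u} [Category.{v} C] [Category.{v} D] {κ : Cardinal.{v}}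
variable (H : ObjectProperty.FullSubcategory (IsPresentableObj κ (C := C)) ⥤
    ObjectProperty.FullSubcategory (IsPresentableObj κ (C := D)))
variable (hC : IsAccessibleCat κ C) (hD : IsAccessibleCat κ D)

theorem Ext_map (hκ : κ.IsRegular) {X Y : C} (f : X ⟶ Y) :
    (Ext H hC hD hκ).map f = extMap H hC hD hκ f := rfl

/-- The canonical retraction exhibiting `extObj A` as `H.obj A` for presentable `A`. -/
noncomputable def retr (A : ObjectProperty.FullSubcategory (IsPresentableObj κ (C := C))) :
    extObj H hC hD A.obj ⟶ (HD H).obj A :=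
  (extCC H hC hD A.obj).isColimit.desc (Cocone.mk ((HD H).obj A)
    { app := fun j => (HD H).map (toK ((presOf hC A.obj).app j))
      naturality := fun j j' u => by
        dsimp only [Functor.const_obj_obj, Functor.const_obj_map]
        rw [Category.comp_id, extDiag_map, ← Functor.map_comp, toK_comp,
          (presOf hC A.obj).w u] })

theorem retr_ι (A : ObjectProperty.FullSubcategory (IsPresentableObj κ (C := C)))
    (j : (presOf hC A.obj).J) :
    (extCC H hC hD A.obj).cocone.ι.app j ≫ retr H hC hD A =
      (HD H).map (toK ((presOf hC A.obj).app j)) :=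
  (extCC H hC hD A.obj).isColimit.fac _ j

/-- For a presentable object `A`, the extension at `A` is isomorphic to `H.obj A`. -/
noncomputable def extIso (hκ : κ.IsRegular) (A : ObjectProperty.FullSubcategory (IsPresentableObj κ (C := C))) :
    (HD H).obj A ≅ extObj H hC hD A.obj where
  hom := ext H hC hD hκ A (𝟙 A.obj)
  inv := retr H hC hD A
  hom_inv_id := by
    obtain ⟨j, h, e⟩ := (presOf hC A.obj).exists_factor' A.property (𝟙 A.obj)
    rw [ext_fac H hC hD hκ h e, Category.assoc, retr_ι, ← Functor.map_comp, toK_comp, e, toK_id,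
      CategoryTheory.Functor.map_id]
  inv_hom_id := (extCC H hC hD A.obj).isColimit.hom_ext (fun j => by
    rw [← Category.assoc, retr_ι,
      ← ext_pre H hC hD hκ (A' := (liftP hC A.obj).obj j) ((presOf hC A.obj).app j) (𝟙 A.obj),
      Category.comp_id]
    exact (ext_ι H hC hD hκ j).trans (Category.comp_id _).symm)

theorem extIso_natural (hκ : κ.IsRegular)
    {A B : ObjectProperty.FullSubcategory (IsPresentableObj κ (C := C))} (k : A.obj ⟶ B.obj) :
    (extIso H hC hD hκ A).hom ≫ extMap H hC hD hκ k =
      (HD H).map (toK k) ≫ (extIso H hC hD hκ B).hom := by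
  show ext H hC hD hκ A (𝟙 A.obj) ≫ extMap H hC hD hκ k =
    (HD H).map (toK k) ≫ ext H hC hD hκ B (𝟙 B.obj)
  rw [ext_map H hC hD hκ, Category.id_comp, ← ext_pre H hC hD hκ k (𝟙 B.obj), Category.comp_id]

theorem isPresentable_of_iso {A B : D} (e : A ≅ B) (h : IsPresentableObj κ A) :
    IsPresentableObj κ B := by
  intro J _ filt
  haveI := h J _ filt
  exact preservesColimitsOfShape_of_natIso (coyoneda.mapIso e.op).symm

theorem ext_presentable (hκ : κ.IsRegular)
    (A : ObjectProperty.FullSubcategory (IsPresentableObj κ (C := C))) :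
    IsPresentableObj κ (extObj H hC hD A.obj) :=
  isPresentable_of_iso (extIso H hC hD hκ A) (H.obj A).property

section Preserves

variable (hκ : κ.IsRegular) {J : Type v} [SmallCategory J] (filt : IsCardFiltered κ J)
variable {d : J ⥤ C} {t : Cocone d} (ht : IsColimit t)
variable (s : Cocone (d ⋙ Ext H hC hD hκ))
include filt ht

/-- The descent data for a cocone on the image of a `κ`-filtered diagram. -/
noncomputable def extCone (A : ObjectProperty.FullSubcategory (IsPresentableObj κ (C := C)))
    (g : A.obj ⟶ t.pt) : (HD H).obj A ⟶ s.pt :=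
  ext H hC hD hκ A (exists_factor filt ht A.property g).choose_spec.choose ≫
    s.ι.app (exists_factor filt ht A.property g).choose

theorem extCone_indep (A : ObjectProperty.FullSubcategory (IsPresentableObj κ (C := C)))
    {i₁ i₂ : J} (h₁ : A.obj ⟶ d.obj i₁) (h₂ : A.obj ⟶ d.obj i₂)
    (e : h₁ ≫ t.ι.app i₁ = h₂ ≫ t.ι.app i₂) :
    ext H hC hD hκ A h₁ ≫ s.ι.app i₁ = ext H hC hD hκ A h₂ ≫ s.ι.app i₂ := by
  obtain ⟨k, u, v, huv⟩ := exists_equalize hκ filt ht A.property h₁ h₂ e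
  rw [← s.w u, ← s.w v, Functor.comp_map, Functor.comp_map, Ext_map, Ext_map,
    ← Category.assoc, ← Category.assoc, ext_map H hC hD hκ, ext_map H hC hD hκ, huv]

theorem extCone_fac (A : ObjectProperty.FullSubcategory (IsPresentableObj κ (C := C)))
    {g : A.obj ⟶ t.pt} {i : J} (h : A.obj ⟶ d.obj i) (e : h ≫ t.ι.app i = g) :
    extCone H hC hD hκ filt ht s A g = ext H hC hD hκ A h ≫ s.ι.app i := by
  apply extCone_indep H hC hD hκ filt ht s A
  rw [e]
  exact (exists_factor filt ht A.property g).choose_spec.choose_spec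

theorem extCone_pre {A' A : ObjectProperty.FullSubcategory (IsPresentableObj κ (C := C))}
    (k : A'.obj ⟶ A.obj) (g : A.obj ⟶ t.pt) :
    extCone H hC hD hκ filt ht s A' (k ≫ g) =
      (HD H).map (toK k) ≫ extCone H hC hD hκ filt ht s A g := by
  obtain ⟨i, h, e⟩ := exists_factor filt ht A.property g
  rw [extCone_fac H hC hD hκ filt ht s A h e,
    extCone_fac H hC hD hκ filt ht s A' (k ≫ h) (by rw [Category.assoc, e]),
    ext_pre H hC hD hκ, Category.assoc]

/-- The descent morphism out of the extension of a colimit. -/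
noncomputable def extDesc : extObj H hC hD t.pt ⟶ s.pt :=
  (extCC H hC hD t.pt).isColimit.desc (Cocone.mk s.pt
    { app := fun j => extCone H hC hD hκ filt ht s _ ((presOf hC t.pt).app j)
      naturality := fun j j' u => by
        dsimp only [Functor.const_obj_obj, Functor.const_obj_map]
        rw [Category.comp_id, extDiag_map, ← extCone_pre H hC hD hκ filt ht s,
          (presOf hC t.pt).w u] })

theorem extDesc_ι (j : (presOf hC t.pt).J) :
    (extCC H hC hD t.pt).cocone.ι.app j ≫ extDesc H hC hD hκ filt ht s =
      extCone H hC hD hκ filt ht s _ ((presOf hC t.pt).app j) :=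
  (extCC H hC hD t.pt).isColimit.fac _ j

theorem ext_extDesc (A : ObjectProperty.FullSubcategory (IsPresentableObj κ (C := C))) (g : A.obj ⟶ t.pt) :
    ext H hC hD hκ A g ≫ extDesc H hC hD hκ filt ht s =
      extCone H hC hD hκ filt ht s A g := by
  obtain ⟨j, h, e⟩ := (presOf hC t.pt).exists_factor' A.property g
  rw [ext_fac H hC hD hκ h e, Category.assoc, extDesc_ι,
    ← extCone_pre H hC hD hκ filt ht s, e]

/-- The extension functor preserves the colimit `t`. -/
noncomputable def isColimitExt : IsColimit ((Ext H hC hD hκ).mapCocone t) where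
  desc s := extDesc H hC hD hκ filt ht s
  fac s i := (extCC H hC hD (d.obj i)).isColimit.hom_ext (fun j => by
    rw [Functor.mapCocone_ι_app, Ext_map H hC hD hκ, ← Category.assoc, extMap_ι H hC hD hκ,
      ext_extDesc H hC hD hκ filt ht s,
      extCone_fac H hC hD hκ filt ht s ((liftP hC (d.obj i)).obj j)
        ((presOf hC (d.obj i)).app j) rfl,
      ext_ι H hC hD hκ])
  uniq s m hm := (extCC H hC hD t.pt).isColimit.hom_ext (fun j => by
    rw [extDesc_ι]
    obtain ⟨i, h, e⟩ := exists_factor filt ht ((presOf hC t.pt).pres j) ((presOf hC t.pt).app j)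
    rw [extCone_fac H hC hD hκ filt ht s ((liftP hC t.pt).obj j) h e, ← ext_ι H hC hD hκ j,
      ← e, ← ext_map H hC hD hκ, Category.assoc, ← Ext_map H hC hD hκ, ← hm i,
      Functor.mapCocone_ι_app, ← Category.assoc])

end Preserves

theorem Ext_strong (hκ : κ.IsRegular) : IsStronglyAccessible κ (Ext H hC hD hκ) where
  preservesFiltered J _ filt :=
    ⟨fun {d} => ⟨fun {t} ht => ⟨isColimitExt H hC hD hκ filt ht⟩⟩⟩
  preservesPresentable A hA := ext_presentable H hC hD hκ ⟨A, hA⟩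

/-- Restricting the extension recovers `H` up to isomorphism. -/
noncomputable def restrIso (hκ : κ.IsRegular) :
    (restrictionFunctor κ C D).obj ⟨Ext H hC hD hκ, Ext_strong H hC hD hκ⟩ ≅ H :=
  NatIso.ofComponents (fun A => isoK (extIso H hC hD hκ A).symm) (fun {A B} k => by
    apply ObjectProperty.hom_ext
    show extMap H hC hD hκ k.hom ≫ (extIso H hC hD hκ B).inv =
      (extIso H hC hD hκ A).inv ≫ (HD H).map (toK k.hom)
    rw [Iso.comp_inv_eq, Category.assoc, ← extIso_natural H hC hD hκ (k.hom : A.obj ⟶ B.obj),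
      Iso.inv_hom_id_assoc])

end AccExt
namespace AccExt

section FullFaithful

variable {C D : Type u} [Category.{v} C] [Category.{v} D] {κ : Cardinal.{v}}
variable {F G : C ⥤ D}

/-- A strongly accessible functor preserves the chosen presentation colimits. -/
noncomputable def mapPres (hF : IsStronglyAccessible κ F) (hC : IsAccessibleCat κ C) (X : C) :
    IsColimit (F.mapCocone (Cocone.mk X (presOf hC X).ι)) := by
  haveI := hF.preservesFiltered _ _ (presOf hC X).filt
  exact isColimitOfPreserves F (presOf hC X).ht

theorem natTrans_ext (hF : IsStronglyAccessible κ F) (hC : IsAccessibleCat κ C) {η θ : F ⟶ G}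
    (h : ∀ A : ObjectProperty.FullSubcategory (IsPresentableObj κ (C := C)), η.app A.obj = θ.app A.obj) :
    η = θ := by
  ext X
  apply (mapPres hF hC X).hom_ext
  intro j
  rw [Functor.mapCocone_ι_app, η.naturality, θ.naturality,
    h ⟨(presOf hC X).F.obj j, (presOf hC X).pres j⟩]

variable (hF : IsStronglyAccessible κ F) (hC : IsAccessibleCat κ C)
  (hG : IsStronglyAccessible κ G)
  (φ : (restrictionFunctor κ C D).obj ⟨F, hF⟩ ≅ (restrictionFunctor κ C D).obj ⟨G, hG⟩)

/-- The component of `φ` at a presentable object, seen as a morphism in `D`. -/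
def compApp (A : ObjectProperty.FullSubcategory (IsPresentableObj κ (C := C))) :
    F.obj A.obj ⟶ G.obj A.obj := (φ.hom.app A).hom

theorem φ_nat (A B : ObjectProperty.FullSubcategory (IsPresentableObj κ (C := C))) (k : A.obj ⟶ B.obj) :
    F.map k ≫ compApp hF hG φ B = compApp hF hG φ A ≫ G.map k :=
  congrArg InducedCategory.Hom.hom (φ.hom.naturality (toK k))

/-- The component of the natural transformation extending `φ`. -/
noncomputable def transApp (X : C) : F.obj X ⟶ G.obj X :=
  (mapPres hF hC X).desc (Cocone.mk (G.obj X)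
    { app := fun j => compApp hF hG φ ((liftP hC X).obj j) ≫ G.map ((presOf hC X).app j)
      naturality := fun j j' u => by
        dsimp
        rw [Category.comp_id, ← Category.assoc, φ_nat hF hG φ ((liftP hC X).obj j) ((liftP hC X).obj j') ((presOf hC X).F.map u),
          Category.assoc, ← G.map_comp, (presOf hC X).w u] })

theorem transApp_ι (X : C) (j : (presOf hC X).J) :
    F.map ((presOf hC X).app j) ≫ transApp hF hC hG φ X =
      compApp hF hG φ ((liftP hC X).obj j) ≫ G.map ((presOf hC X).app j) :=
  (mapPres hF hC X).fac _ j

theorem transApp_char (A : ObjectProperty.FullSubcategory (IsPresentableObj κ (C := C))) {X : C}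
    (g : A.obj ⟶ X) :
    F.map g ≫ transApp hF hC hG φ X = compApp hF hG φ A ≫ G.map g := by
  obtain ⟨j, h, e⟩ := (presOf hC X).exists_factor' A.property g
  rw [← e, F.map_comp, Category.assoc, transApp_ι, ← Category.assoc,
    φ_nat hF hG φ A ((liftP hC X).obj j) h, Category.assoc, ← G.map_comp]

theorem transApp_pres (A : ObjectProperty.FullSubcategory (IsPresentableObj κ (C := C))) :
    transApp hF hC hG φ A.obj = compApp hF hG φ A := by
  have h := transApp_char hF hC hG φ A (𝟙 A.obj)
  rw [CategoryTheory.Functor.map_id, CategoryTheory.Functor.map_id, Category.id_comp,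
    Category.comp_id] at h
  exact h

/-- The natural transformation extending `φ`. -/
noncomputable def trans : F ⟶ G where
  app := transApp hF hC hG φ
  naturality X Y f := (mapPres hF hC X).hom_ext (fun j => by
    show F.map ((presOf hC X).app j) ≫ F.map f ≫ transApp hF hC hG φ Y =
      F.map ((presOf hC X).app j) ≫ transApp hF hC hG φ X ≫ G.map f
    conv_lhs => rw [← Category.assoc, ← F.map_comp]
    rw [transApp_char hF hC hG φ ((liftP hC X).obj j) (((presOf hC X).app j) ≫ f)]
    conv_rhs => rw [← Category.assoc, transApp_ι hF hC hG φ X j]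
    rw [Category.assoc, ← G.map_comp])

theorem restr_trans :
    (restrictionFunctor κ C D).map (X := ⟨F, hF⟩) (Y := ⟨G, hG⟩) (ObjectProperty.homMk (trans hF hC hG φ)) = φ.hom := by
  apply NatTrans.ext
  funext A
  apply ObjectProperty.hom_ext
  exact transApp_pres hF hC hG φ A

theorem trans_trans :
    trans hF hC hG φ ≫ trans hG hC hF φ.symm = 𝟙 F := by
  apply natTrans_ext hF hC
  intro A
  rw [NatTrans.comp_app, NatTrans.id_app]
  show transApp hF hC hG φ A.obj ≫ transApp hG hC hF φ.symm A.obj = 𝟙 (F.obj A.obj)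
  rw [transApp_pres, transApp_pres]
  have h := φ.hom_inv_id_app A
  have h2 := congrArg InducedCategory.Hom.hom h
  exact h2

end FullFaithful

end AccExt


/-- Restriction to `κ`-presentable objects induces an equivalence between the groupoid of
strongly `κ`-accessible functors `C ⥤ D` (with natural isomorphisms) and the groupoid of
functors `K_κ(C) ⥤ K_κ(D)` (with natural isomorphisms); the inverse is given by
`κ`-ind-completion. -/
theorem restriction_core_equivalence {C D : Type u} [Category.{v} C] [Category.{v} D]
    (κ : Cardinal.{v}) (hκ : κ.IsRegular)
    (hC : IsAccessibleCat κ C) (hD : IsAccessibleCat κ D) :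
    (Core.functorToCore (Core.inclusion
        (ObjectProperty.FullSubcategory (fun F : C ⥤ D => IsStronglyAccessible κ F)) ⋙
      restrictionFunctor κ C D)).IsEquivalence := by
  set R := Core.functorToCore (Core.inclusion
      (ObjectProperty.FullSubcategory (fun F : C ⥤ D => IsStronglyAccessible κ F)) ⋙
    restrictionFunctor κ C D) with hR
  haveI : R.Faithful := ⟨by
    intro X Y ψ₁ ψ₂ h
    apply Core.hom_ext
    apply ObjectProperty.hom_ext
    apply AccExt.natTrans_ext X.of.property hC
    intro A
    exact congrArg InducedCategory.Hom.hom
      (NatTrans.congr_app (congrArg (fun f => f.iso.hom) h) A)⟩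
  haveI : R.Full := ⟨by
    intro X Y φ
    refine ⟨⟨⟨ObjectProperty.homMk (AccExt.trans X.of.property hC Y.of.property φ.iso),
      ObjectProperty.homMk (AccExt.trans Y.of.property hC X.of.property φ.iso.symm), ?_, ?_⟩⟩, ?_⟩
    · apply ObjectProperty.hom_ext
      exact AccExt.trans_trans X.of.property hC Y.of.property φ.iso
    · apply ObjectProperty.hom_ext
      have := AccExt.trans_trans Y.of.property hC X.of.property φ.iso.symm
      exact this
    · apply Core.hom_ext
      exact AccExt.restr_trans X.of.property hC Y.of.property φ.iso⟩
  haveI : R.EssSurj := ⟨by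
    intro H
    refine ⟨⟨⟨AccExt.Ext H.of hC hD hκ, AccExt.Ext_strong H.of hC hD hκ⟩⟩,
      ⟨Core.isoMk (AccExt.restrIso H.of hC hD hκ)⟩⟩⟩
  exact {}
end

section
/- If F : C → D is a relative functor between relative categories admitting a relative functor G : D → C together with natural transformations η : id_C → G ∘ F and ε : F ∘ G → id_D whose components are weak equivalences, then the induced functor on homotopy categories Ho(C) → Ho(D) (localizations at the weak equivalences) is an equivalence of categories. -/
open CategoryTheory

/-- A relative category structure on a category: a wide subcategory of weak
equivalences. -/
structure RelCatStr (C : Type u) [Category.{v} C] where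
  W : MorphismProperty C
  id_mem : ∀ X : C, W (𝟙 X)
  comp_mem : ∀ {X Y Z : C} (f : X ⟶ Y) (g : Y ⟶ Z), W f → W g → W (f ≫ g)

/-- If a relative functor `F` admits a relative functor `G` together with natural
transformations `η : id ⟶ G ∘ F` and `ε : F ∘ G ⟶ id` whose components are weak
equivalences, then the induced functor on homotopy categories (localizations at the weak
equivalences) is an equivalence. -/
theorem homotopy_equivalence_induces_equivalence_of_localizations
    {C : Type u} {D : Type u} [Category.{v} C] [Category.{v} D]
    (RC : RelCatStr C) (RD : RelCatStr D)
    (F : C ⥤ D) (hF : ∀ {X Y : C} (f : X ⟶ Y), RC.W f → RD.W (F.map f))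
    (G : D ⥤ C) (hG : ∀ {X Y : D} (f : X ⟶ Y), RD.W f → RC.W (G.map f))
    (η : 𝟭 C ⟶ F ⋙ G) (hη : ∀ X : C, RC.W (η.app X))
    (ε : G ⋙ F ⟶ 𝟭 D) (hε : ∀ X : D, RD.W (ε.app X)) :
    (Localization.Construction.lift (F ⋙ RD.W.Q)
      (fun _ _ f hf => RD.W.Q_inverts _ (hF f hf))).IsEquivalence := by
  have hFinv : RC.W.IsInvertedBy (F ⋙ RD.W.Q) := fun _ _ f hf => RD.W.Q_inverts _ (hF f hf)
  have hGinv : RD.W.IsInvertedBy (G ⋙ RC.W.Q) := fun _ _ f hf => RC.W.Q_inverts _ (hG f hf)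
  let F' : RC.W.Localization ⥤ RD.W.Localization := Localization.Construction.lift _ hFinv
  let G' : RD.W.Localization ⥤ RC.W.Localization := Localization.Construction.lift _ hGinv
  -- lifting instances for the composites
  haveI l₁ : Localization.Lifting RC.W.Q RC.W ((F ⋙ G) ⋙ RC.W.Q) (F' ⋙ G') :=
    Localization.Lifting.ofIsos RC.W.Q RC.W
      ((Functor.associator _ _ _).symm ≪≫
        Functor.isoWhiskerRight (Localization.Lifting.iso RC.W.Q RC.W (F ⋙ RD.W.Q) F') G' ≪≫
        Functor.associator _ _ _ ≪≫
        Functor.isoWhiskerLeft F (Localization.Lifting.iso RD.W.Q RD.W (G ⋙ RC.W.Q) G') ≪≫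
        (Functor.associator _ _ _).symm)
      (Iso.refl (F' ⋙ G'))
  haveI l₂ : Localization.Lifting RD.W.Q RD.W ((G ⋙ F) ⋙ RD.W.Q) (G' ⋙ F') :=
    Localization.Lifting.ofIsos RD.W.Q RD.W
      ((Functor.associator _ _ _).symm ≪≫
        Functor.isoWhiskerRight (Localization.Lifting.iso RD.W.Q RD.W (G ⋙ RC.W.Q) G') F' ≪≫
        Functor.associator _ _ _ ≪≫
        Functor.isoWhiskerLeft G (Localization.Lifting.iso RC.W.Q RC.W (F ⋙ RD.W.Q) F') ≪≫
        (Functor.associator _ _ _).symm)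
      (Iso.refl (G' ⋙ F'))
  haveI l₃ : Localization.Lifting RC.W.Q RC.W (𝟭 C ⋙ RC.W.Q) (𝟭 _) :=
    Localization.Lifting.ofIsos RC.W.Q RC.W (Functor.leftUnitor _).symm (Iso.refl (𝟭 _))
  haveI l₄ : Localization.Lifting RD.W.Q RD.W (𝟭 D ⋙ RD.W.Q) (𝟭 _) :=
    Localization.Lifting.ofIsos RD.W.Q RD.W (Functor.leftUnitor _).symm (Iso.refl (𝟭 _))
  -- lifted unit and counit
  let α : 𝟭 RC.W.Localization ⟶ F' ⋙ G' :=
    Localization.liftNatTrans RC.W.Q RC.W (𝟭 C ⋙ RC.W.Q) ((F ⋙ G) ⋙ RC.W.Q) _ _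
      (Functor.whiskerRight η RC.W.Q)
  let β : G' ⋙ F' ⟶ 𝟭 RD.W.Localization :=
    Localization.liftNatTrans RD.W.Q RD.W ((G ⋙ F) ⋙ RD.W.Q) (𝟭 D ⋙ RD.W.Q) _ _
      (Functor.whiskerRight ε RD.W.Q)
  haveI : ∀ X : RC.W.Localization, IsIso (α.app X) := by
    intro X
    obtain ⟨Y, rfl⟩ := (Localization.Construction.objEquiv RC.W).surjective X
    show IsIso (α.app (RC.W.Q.obj Y))
    rw [Localization.liftNatTrans_app]
    have : IsIso ((Functor.whiskerRight η RC.W.Q).app Y) := by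
      dsimp [Functor.whiskerRight]
      exact RC.W.Q_inverts _ (hη Y)
    infer_instance
  haveI : ∀ X : RD.W.Localization, IsIso (β.app X) := by
    intro X
    obtain ⟨Y, rfl⟩ := (Localization.Construction.objEquiv RD.W).surjective X
    show IsIso (β.app (RD.W.Q.obj Y))
    rw [Localization.liftNatTrans_app]
    have : IsIso ((Functor.whiskerRight ε RD.W.Q).app Y) := by
      dsimp [Functor.whiskerRight]
      exact RD.W.Q_inverts _ (hε Y)
    infer_instance
  haveI : IsIso α := NatIso.isIso_of_isIso_app α
  haveI : IsIso β := NatIso.isIso_of_isIso_app β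
  exact (CategoryTheory.Equivalence.mk F' G' (asIso α) (asIso β)).isEquivalence_functor
end
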